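/- Let (P, W, c) be a witness Gabriel drawing of a complete k-partite graph with k ≥ 3, with P ∪ W in general position and with every color class of c containing at least two points. Then for every color i ∈ Fin k there are at least two points p ∈ P with c(p) = i that lie on the convex hull of P, i.e., p ∉ convexHull(P \ {p}). -/

import Mathlib

open scoped RealInnerProductSpace

noncomputable section

/-- The Euclidean plane. -/
abbrev Pt := EuclideanSpace ℝ (Fin 2)

/-- The closed disk with diameter `ab`. -/
def diskD (a b : Pt) : Set Pt := Metric.closedBall (midpoint ℝ a b) (dist a b / 2)

/-- `a` and `b` are adjacent in the witness Gabriel graph with witness set `W`. -/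
def gabrielEdge (W : Set Pt) (a b : Pt) : Prop := (diskD a b \ {a, b}) ∩ W = ∅

/-- General position: no three points collinear, no four points concyclic. -/
def GenPos (S : Set Pt) : Prop :=
  (∀ a ∈ S, ∀ b ∈ S, ∀ c ∈ S, a ≠ b → a ≠ c → b ≠ c → ¬ Collinear ℝ ({a, b, c} : Set Pt)) ∧
  (∀ a ∈ S, ∀ b ∈ S, ∀ c ∈ S, ∀ d ∈ S, a ≠ b → a ≠ c → a ≠ d → b ≠ c → b ≠ d → c ≠ d →
    ¬ EuclideanGeometry.Cospherical ({a, b, c, d} : Set Pt))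

/-- Planar determinant `u₁v₂ − u₂v₁`. -/
def det2 (u v : Pt) : ℝ := u 0 * v 1 - u 1 * v 0

/-- Counterclockwise convex position. -/
def CCWConvexPos {m : ℕ} (q : Fin m → Pt) : Prop :=
  ∀ i j k : Fin m, i < j → j < k → 0 < det2 (q j - q i) (q k - q i)

/-- Cyclic successor in `Fin m`. -/
def cyclicSucc {m : ℕ} (hm : 0 < m) (i : Fin m) : Fin m :=
  ⟨((i : ℕ) + 1) % m, Nat.mod_lt _ hm⟩

/-- Membership in the diameter disk, via inner products. -/
lemma mem_diskD_iff {a b x : Pt} : x ∈ diskD a b ↔ ⟪a - x, b - x⟫ ≤ 0 := by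
  have hmid : x - midpoint ℝ a b = (-(2⁻¹:ℝ)) • ((a - x) + (b - x)) := by
    have h2 : ((⅟2 : ℝ)) = (2⁻¹ : ℝ) := by norm_num
    rw [midpoint_eq_smul_add, h2]
    module
  have hab : a - b = (a - x) - (b - x) := by abel
  rw [diskD, Metric.mem_closedBall, dist_eq_norm, dist_eq_norm, hmid, hab, norm_smul]
  set u := a - x
  set v := b - x
  have h1 := norm_add_sq_real u v
  have h2 := norm_sub_sq_real u v
  have h3 := norm_nonneg (u + v)
  have h4 := norm_nonneg (u - v)
  constructor
  · intro h
    simp only [norm_neg, Real.norm_eq_abs] at h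
    rw [abs_of_pos (by norm_num : (0:ℝ) < 2⁻¹)] at h
    nlinarith
  · intro h
    simp only [norm_neg, Real.norm_eq_abs]
    rw [abs_of_pos (by norm_num : (0:ℝ) < 2⁻¹)]
    nlinarith

/-- In a witness Gabriel drawing of a complete `k`-partite graph (`k ≥ 3`,
at least two points of each color), at least two vertices of each color lie on the convex
hull of the vertex set. -/
theorem two_vertices_of_each_color_on_hull
    {k : ℕ} (hk : 3 ≤ k) (P W : Finset Pt) (c : Pt → Fin k)
    (hgp : GenPos ((P : Set Pt) ∪ (W : Set Pt)))
    (hsize : ∀ i : Fin k, 2 ≤ (P.filter (fun p => c p = i)).card)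
    (hdraw : ∀ a ∈ P, ∀ b ∈ P, a ≠ b →
      (gabrielEdge (W : Set Pt) a b ↔ c a ≠ c b)) :
    ∀ i : Fin k, ∃ p ∈ P, ∃ q ∈ P, p ≠ q ∧ c p = i ∧ c q = i ∧
      p ∉ convexHull ℝ ((P : Set Pt) \ {p}) ∧
      q ∉ convexHull ℝ ((P : Set Pt) \ {q}) := by
  classical
  intro i
  by_contra hcon
  push_neg at hcon
  -- the class of color i, with ≥ 2 elements
  have hcard : 1 < (P.filter (fun p => c p = i)).card := lt_of_lt_of_le one_lt_two (hsize i)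
  -- choose v : a point of color i such that every color-i hull vertex equals v
  obtain ⟨v, hvP, hvc, hveq⟩ :
      ∃ v ∈ P, c v = i ∧ ∀ e ∈ P, c e = i →
        e ∉ convexHull ℝ ((P : Set Pt) \ {e}) → e = v := by
    by_cases hv : ∃ v ∈ P, c v = i ∧ v ∉ convexHull ℝ ((P : Set Pt) \ {v})
    · obtain ⟨v, hvP, hvc, hvV⟩ := hv
      refine ⟨v, hvP, hvc, fun e heP hec heV => ?_⟩
      by_contra hne
      exact hvV (hcon e heP v hvP hne hec hvc heV)
    · push_neg at hv
      obtain ⟨v, hvF⟩ := Finset.card_pos.mp (lt_trans one_pos hcard)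
      rw [Finset.mem_filter] at hvF
      exact ⟨v, hvF.1, hvF.2, fun e heP hec heV => absurd (hv e heP hec) heV⟩
  -- choose s ≠ v of color i
  obtain ⟨s, hsF, hsv⟩ := Finset.exists_mem_ne hcard v
  rw [Finset.mem_filter] at hsF
  obtain ⟨hsP, hsc⟩ := hsF
  -- witness in the disk with diameter s v
  have hnedge : ¬ gabrielEdge (W : Set Pt) s v := by
    rw [hdraw s hsP v hvP hsv]
    simp [hsc, hvc]
  obtain ⟨w₀, hw₀mem, hw₀W⟩ :
      ((diskD s v \ {s, v}) ∩ (W : Set Pt)).Nonempty :=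
    Set.nonempty_iff_ne_empty.2 hnedge
  obtain ⟨hw₀d, hw₀ns⟩ := hw₀mem
  have hw₀s : w₀ ≠ s := by simp only [Set.mem_insert_iff, Set.mem_singleton_iff] at hw₀ns; tauto
  have hw₀v : w₀ ≠ v := by simp only [Set.mem_insert_iff, Set.mem_singleton_iff] at hw₀ns; tauto
  -- key positivity: every non-i point of P other than w₀ is strictly on v's side
  have key : ∀ x ∈ P, c x ≠ i → x ≠ w₀ → 0 < ⟪v - w₀, x - w₀⟫ := by
    intro x hxP hxc hxw
    have hxv : x ≠ v := fun h => hxc (h ▸ hvc)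
    have hedge : gabrielEdge (W : Set Pt) x v :=
      (hdraw x hxP v hvP hxv).2 (by rw [hvc]; exact hxc)
    by_contra hle
    push_neg at hle
    have hwd : w₀ ∈ diskD x v := mem_diskD_iff.2 (by rw [real_inner_comm]; exact hle)
    have : w₀ ∈ (diskD x v \ {x, v}) ∩ (W : Set Pt) :=
      ⟨⟨hwd, by simp [hxw.symm, hw₀v]⟩, hw₀W⟩
    rw [gabrielEdge] at hedge
    rw [hedge] at this
    exact this
  -- convex hull machinery
  set K := convexHull ℝ (P : Set Pt) with hK
  have hPfin : (P : Set Pt).Finite := P.finite_toSet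
  have hKcomp : IsCompact K := hPfin.isCompact_convexHull (𝕜 := ℝ)
  have hKM := closure_convexHull_extremePoints hKcomp (convex_convexHull ℝ _)
  have hEsub : K.extremePoints ℝ ⊆ (P : Set Pt) := extremePoints_convexHull_subset
  have hEfin : (K.extremePoints ℝ).Finite := hPfin.subset hEsub
  have hKE : convexHull ℝ (K.extremePoints ℝ) = K :=
    (hEfin.isCompact_convexHull (𝕜 := ℝ)).isClosed.closure_eq ▸ hKM
  -- extreme points are hull vertices
  have hEvert : ∀ e ∈ K.extremePoints ℝ, e ∉ convexHull ℝ ((P : Set Pt) \ {e}) := by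
    intro e he hecon
    have hsub : convexHull ℝ ((P : Set Pt) \ {e}) ⊆ K :=
      convexHull_mono Set.diff_subset
    have h1 : e ∈ (convexHull ℝ ((P : Set Pt) \ {e})).extremePoints ℝ := by
      rw [mem_extremePoints] at he ⊢
      exact ⟨hecon, fun x₁ h₁ x₂ h₂ hseg => he.2 x₁ (hsub h₁) x₂ (hsub h₂) hseg⟩
    exact (extremePoints_convexHull_subset h1).2 rfl
  -- the reduced finite set A
  set A : Finset Pt := (P.filter (fun p => c p ≠ i)) ∪ {v} with hA
  have hEA : K.extremePoints ℝ ⊆ (A : Set Pt) := by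
    intro e he
    have heP : e ∈ P := hEsub he
    by_cases hec : c e = i
    · have : e = v := hveq e heP hec (hEvert e he)
      simp [hA, this]
    · simp [hA, Finset.mem_filter, heP, hec]
  have hsA : s ∈ convexHull ℝ (A : Set Pt) := by
    have h1 : s ∈ K := subset_convexHull ℝ _ hsP
    rw [← hKE] at h1
    exact convexHull_mono hEA h1
  -- weights
  rw [Finset.convexHull_eq] at hsA
  obtain ⟨wgt, hwnn, hwsum, hwcm⟩ := hsA
  have hsum_eq : s = ∑ a ∈ A, wgt a • a := by
    rw [← hwcm, Finset.centerMass_eq_of_sum_1 _ _ hwsum]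
    rfl
  -- the linear functional values
  have hAval : ∀ a ∈ A, 0 ≤ ⟪v - w₀, a - w₀⟫ ∧ (⟪v - w₀, a - w₀⟫ = 0 → a = w₀) := by
    intro a haA
    rcases Finset.mem_union.1 haA with haf | hav
    · rw [Finset.mem_filter] at haf
      by_cases haw : a = w₀
      · subst haw; simp
      · have := key a haf.1 haf.2 haw
        exact ⟨le_of_lt this, fun h => absurd h (ne_of_gt this)⟩
    · rw [Finset.mem_singleton] at hav
      have hpos : 0 < ⟪v - w₀, a - w₀⟫ := by
        rw [hav]
        rw [real_inner_self_eq_norm_sq]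
        exact pow_pos (norm_pos_iff.2 (sub_ne_zero.2 (Ne.symm hw₀v))) 2
      exact ⟨le_of_lt hpos, fun h => absurd h (ne_of_gt hpos)⟩
  -- ψ s ≤ 0
  have hψs : ⟪v - w₀, s - w₀⟫ ≤ 0 := by
    have := mem_diskD_iff.1 hw₀d
    rwa [real_inner_comm] at this
  -- expand ψ s as a sum
  have hexp : ⟪v - w₀, s - w₀⟫ = ∑ a ∈ A, wgt a * ⟪v - w₀, a - w₀⟫ := by
    have h1 : s - w₀ = ∑ a ∈ A, wgt a • (a - w₀) := by
      rw [hsum_eq]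
      rw [Finset.sum_congr rfl (fun a _ => smul_sub (wgt a) a w₀), Finset.sum_sub_distrib,
        ← Finset.sum_smul, hwsum, one_smul]
    rw [h1, inner_sum]
    exact Finset.sum_congr rfl (fun a _ => real_inner_smul_right _ _ _)
  -- conclude every term is zero
  have hterm : ∀ a ∈ A, wgt a * ⟪v - w₀, a - w₀⟫ = 0 := by
    have hnn : ∀ a ∈ A, 0 ≤ wgt a * ⟪v - w₀, a - w₀⟫ :=
      fun a ha => mul_nonneg (hwnn a ha) (hAval a ha).1
    have hsum0 : ∑ a ∈ A, wgt a * ⟪v - w₀, a - w₀⟫ = 0 :=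
      le_antisymm (hexp ▸ hψs) (Finset.sum_nonneg hnn)
    exact (Finset.sum_eq_zero_iff_of_nonneg hnn).1 hsum0
  -- hence each a with positive weight equals w₀, so s = w₀
  have hsw : s = w₀ := by
    have hsm : ∀ a ∈ A, wgt a • a = wgt a • w₀ := by
      intro a ha
      by_cases h0 : wgt a = 0
      · simp [h0]
      · have hψ0 : ⟪v - w₀, a - w₀⟫ = 0 := by
          rcases mul_eq_zero.1 (hterm a ha) with h | h
          · exact absurd h h0
          · exact h
        rw [(hAval a ha).2 hψ0]
    calc s = ∑ a ∈ A, wgt a • a := hsum_eq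
    _ = ∑ a ∈ A, wgt a • w₀ := Finset.sum_congr rfl hsm
    _ = (∑ a ∈ A, wgt a) • w₀ := (Finset.sum_smul).symm
    _ = w₀ := by rw [hwsum, one_smul]
  exact hw₀s hsw.symm
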